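/- Let f, g : ℝ^m × ℝ^n → ℝ where g(x,·) is μ-strongly convex with minimizer y*(x), A(x,y) = ∇²_{xy} g(x,y), H(x,y) = ∇²_{yy} g(x,y), and define the exact hypergradient G(x) = ∇_x f(x, y*(x)) − A(x, y*(x)) H(x, y*(x))⁻¹ ∇_y f(x, y*(x)) and the approximate hypergradient Ĝ(x, ŷ, v̂) = ∇_x f(x, ŷ) − A(x, ŷ) v̂. Suppose ‖∇_y f‖ ≤ l_f everywhere, ∇_x f and ∇_y f are L_f-Lipschitz, ‖A‖ ≤ L_g and A is ρ-Lipschitz, H is ρ-Lipschitz, and μ·I ⪯ H ⪯ L_g·I. Then ‖Ĝ(x, ŷ, v̂) − G(x)‖ ≤ L₁·‖ŷ − y*(x)‖ + L_g·‖v̂ − H(x,ŷ)⁻¹∇_y f(x,ŷ)‖, where L₁ = L_f + l_f ρ/μ + L_g(L_f/μ + l_f ρ/μ²). -/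
import Mathlib


open scoped RealInnerProductSpace

theorem stmt_9 {m n : ℕ}
    (Gx : EuclideanSpace ℝ (Fin m) → EuclideanSpace ℝ (Fin n) → EuclideanSpace ℝ (Fin m))
    (Gy : EuclideanSpace ℝ (Fin m) → EuclideanSpace ℝ (Fin n) → EuclideanSpace ℝ (Fin n))
    (A : EuclideanSpace ℝ (Fin m) → EuclideanSpace ℝ (Fin n) →
      (EuclideanSpace ℝ (Fin n) →L[ℝ] EuclideanSpace ℝ (Fin m)))
    (H Hinv : EuclideanSpace ℝ (Fin m) → EuclideanSpace ℝ (Fin n) →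
      (EuclideanSpace ℝ (Fin n) →L[ℝ] EuclideanSpace ℝ (Fin n)))
    (ystar : EuclideanSpace ℝ (Fin m) → EuclideanSpace ℝ (Fin n))
    (μ lf Lf Lg ρ : ℝ) (hμ : 0 < μ)
    (hHinv₁ : ∀ x y, (H x y).comp (Hinv x y) = ContinuousLinearMap.id ℝ _)
    (hHinv₂ : ∀ x y, (Hinv x y).comp (H x y) = ContinuousLinearMap.id ℝ _)
    (hlf : ∀ x y, ‖Gy x y‖ ≤ lf)
    (hGxLip : ∀ x y₁ y₂, ‖Gx x y₁ - Gx x y₂‖ ≤ Lf * ‖y₁ - y₂‖)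
    (hGyLip : ∀ x y₁ y₂, ‖Gy x y₁ - Gy x y₂‖ ≤ Lf * ‖y₁ - y₂‖)
    (hA : ∀ x y, ‖A x y‖ ≤ Lg)
    (hALip : ∀ x y₁ y₂, ‖A x y₁ - A x y₂‖ ≤ ρ * ‖y₁ - y₂‖)
    (hHLip : ∀ x y₁ y₂, ‖H x y₁ - H x y₂‖ ≤ ρ * ‖y₁ - y₂‖)
    (hHlower : ∀ x y v, μ * ‖v‖ ^ 2 ≤ ⟪v, H x y v⟫)
    (hHupper : ∀ x y v, ⟪v, H x y v⟫ ≤ Lg * ‖v‖ ^ 2)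
    (x : EuclideanSpace ℝ (Fin m)) (yhat : EuclideanSpace ℝ (Fin n))
    (vhat : EuclideanSpace ℝ (Fin n)) :
    ‖(Gx x yhat - A x yhat vhat) -
        (Gx x (ystar x) - A x (ystar x) (Hinv x (ystar x) (Gy x (ystar x))))‖ ≤
      (Lf + lf * ρ / μ + Lg * (Lf / μ + lf * ρ / μ ^ 2)) * ‖yhat - ystar x‖ +
        Lg * ‖vhat - Hinv x yhat (Gy x yhat)‖ := by
  set y := ystar x with hy
  -- H (Hinv w) = w and Hinv (H z) = z pointwise
  have hHI : ∀ y' (w : EuclideanSpace ℝ (Fin n)), H x y' (Hinv x y' w) = w := by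
    intro y' w
    have := congrFun (congrArg DFunLike.coe (hHinv₁ x y')) w
    simpa using this
  have hIH : ∀ y' (z : EuclideanSpace ℝ (Fin n)), Hinv x y' (H x y' z) = z := by
    intro y' z
    have := congrFun (congrArg DFunLike.coe (hHinv₂ x y')) z
    simpa using this
  -- norm bound on Hinv
  have hinvb : ∀ y' (w : EuclideanSpace ℝ (Fin n)), ‖Hinv x y' w‖ ≤ ‖w‖ / μ := by
    intro y' w
    set v := Hinv x y' w with hv
    have h1 : μ * ‖v‖ ^ 2 ≤ ⟪v, H x y' v⟫ := hHlower x y' v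
    rw [hv, hHI] at h1
    have h3 : ⟪v, w⟫ ≤ ‖v‖ * ‖w‖ := real_inner_le_norm v w
    rcases eq_or_ne v 0 with h | h
    · rw [h]; simp; positivity
    · have hvpos : 0 < ‖v‖ := norm_pos_iff.mpr h
      rw [le_div_iff₀ hμ]
      nlinarith
  have hlf0 : 0 ≤ lf := le_trans (norm_nonneg _) (hlf x y)
  have hLg0 : 0 ≤ Lg := le_trans (norm_nonneg _) (hA x y)
  set Δ := ‖yhat - y‖ with hΔ
  have hΔ0 : 0 ≤ Δ := norm_nonneg _
  have hρΔ0 : 0 ≤ ρ * Δ := le_trans (norm_nonneg _) (hALip x yhat y)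
  set u := Gy x yhat with hu
  set w1 := Hinv x yhat u with hw1
  set w2 := Hinv x y (Gy x y) with hw2
  set t1 := Gx x yhat - Gx x y with ht1
  set t2 := A x yhat (vhat - w1) with ht2
  set t3 := (A x yhat - A x y) w1 with ht3
  set t4 := A x y (Hinv x yhat ((H x y - H x yhat) (Hinv x y u))) with ht4
  set t5 := A x y (Hinv x y (u - Gy x y)) with ht5
  have key : (Gx x yhat - A x yhat vhat) - (Gx x y - A x y w2)
      = t1 - t2 - (t3 + t4 + t5) := by
    rw [ht1, ht2, ht3, ht4, ht5, hw1, hw2]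
    simp only [map_sub, ContinuousLinearMap.sub_apply, hHI, hIH]
    abel
  rw [key]
  have hb : ∀ (y' : EuclideanSpace ℝ (Fin n)) (v : EuclideanSpace ℝ (Fin n)),
      ‖A x y' v‖ ≤ Lg * ‖v‖ := fun y' v =>
    le_trans ((A x y').le_opNorm v)
      (mul_le_mul_of_nonneg_right (hA x y') (norm_nonneg _))
  have hw1b : ‖w1‖ ≤ lf / μ :=
    le_trans (hinvb yhat u) (div_le_div_of_nonneg_right (hlf x yhat) hμ.le)
  have b1 : ‖t1‖ ≤ Lf * Δ := hGxLip x yhat y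
  have b2 : ‖t2‖ ≤ Lg * ‖vhat - w1‖ := hb yhat _
  have b3 : ‖t3‖ ≤ ρ * Δ * (lf / μ) := by
    refine le_trans ((A x yhat - A x y).le_opNorm w1) ?_
    exact mul_le_mul (hALip x yhat y) hw1b (norm_nonneg _) hρΔ0
  have b4 : ‖t4‖ ≤ Lg * (ρ * Δ * (lf / μ) / μ) := by
    refine le_trans (hb y _) (mul_le_mul_of_nonneg_left ?_ hLg0)
    refine le_trans (hinvb yhat _) (div_le_div_of_nonneg_right ?_ hμ.le)
    refine le_trans ((H x y - H x yhat).le_opNorm _) ?_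
    have hH' : ‖H x y - H x yhat‖ ≤ ρ * Δ := by
      rw [norm_sub_rev]; exact hHLip x yhat y
    exact mul_le_mul hH' (le_trans (hinvb y u)
      (div_le_div_of_nonneg_right (hlf x yhat) hμ.le)) (norm_nonneg _) hρΔ0
  have b5 : ‖t5‖ ≤ Lg * (Lf * Δ / μ) := by
    refine le_trans (hb y _) (mul_le_mul_of_nonneg_left ?_ hLg0)
    exact le_trans (hinvb y _) (div_le_div_of_nonneg_right (hGyLip x yhat y) hμ.le)
  have tri : ‖t1 - t2 - (t3 + t4 + t5)‖ ≤ ‖t1‖ + ‖t2‖ + (‖t3‖ + ‖t4‖ + ‖t5‖) := by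
    refine le_trans (norm_sub_le _ _) (add_le_add (norm_sub_le _ _) ?_)
    exact le_trans (norm_add_le _ _) (add_le_add (norm_add_le _ _) le_rfl)
  refine le_trans tri ?_
  have heq : Lf * Δ + Lg * ‖vhat - w1‖ + (ρ * Δ * (lf / μ) + Lg * (ρ * Δ * (lf / μ) / μ)
      + Lg * (Lf * Δ / μ)) = (Lf + lf * ρ / μ + Lg * (Lf / μ + lf * ρ / μ ^ 2)) * Δ
      + Lg * ‖vhat - w1‖ := by
    field_simp
    ring
  linarith [b1, b2, b3, b4, b5]
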